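/- Let V be the two-ended-stack value function on lists of reals: V([]) = 0 and, for a nonempty list l, V(l) = max(head(l) − V(tail(l)), last(l) − V(init(l))). Then for any two lists a = (a_1, …, a_n) and b = (b_1, …, b_n) of the same length, |V(a) − V(b)| ≤ Σ_{i=1}^n |a_i − b_i|. -/

import Mathlib

/-- The value of the two-ended stack game: the player to move takes the left or right
end, maximizing own total minus opponent's. -/
noncomputable def tesVal : List ℝ → ℝ
  | [] => 0
  | a :: l =>
      max (a - tesVal l)
        ((a :: l).getLast (List.cons_ne_nil a l) - tesVal ((a :: l).dropLast))
  termination_by l => l.length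
  decreasing_by
  · simp
  · simp [List.length_dropLast]

lemma tes_zip_concat (l m : List ℝ) (x y : ℝ) (h : l.length = m.length) :
    (List.zipWith (fun x y => |x - y|) (l ++ [x]) (m ++ [y])).sum
      = (List.zipWith (fun x y => |x - y|) l m).sum + |x - y| := by
  rw [List.zipWith_append h]
  simp

lemma tes_aux : ∀ n (a b : List ℝ), a.length = n → b.length = n →
    |tesVal a - tesVal b| ≤ (List.zipWith (fun x y => |x - y|) a b).sum := by
  intro n
  induction n using Nat.strong_induction_on with
  | _ n ih =>
    intro a b ha hb
    match n, a, b with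
    | 0, [], [] => simp [tesVal]
    | n + 1, x :: l, y :: m =>
      rw [tesVal, tesVal]
      refine le_trans (abs_max_sub_max_le_max _ _ _ _) (max_le ?_ ?_)
      · have h1 : |(x - tesVal l) - (y - tesVal m)| ≤ |x - y| + |tesVal l - tesVal m| := by
          have : (x - tesVal l) - (y - tesVal m) = (x - y) - (tesVal l - tesVal m) := by ring
          rw [this]; exact abs_sub _ _
        refine h1.trans ?_
        have h2 := ih n (Nat.lt_succ_self n) l m (by simpa using ha) (by simpa using hb)
        simpa [List.zipWith] using add_le_add_left h2 |x - y|
      · set A := x :: l with hA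
        set B := y :: m with hB
        have hAne : A ≠ [] := by simp [hA]
        have hBne : B ≠ [] := by simp [hB]
        have hln : l.length = n := by simpa [hA] using ha
        have hmn : m.length = n := by simpa [hB] using hb
        have hAlen : A.dropLast.length = n := by simp [hA, hln]
        have hBlen : B.dropLast.length = n := by simp [hB, hmn]
        have h1 : |(A.getLast hAne - tesVal A.dropLast) - (B.getLast hBne - tesVal B.dropLast)|
            ≤ |A.getLast hAne - B.getLast hBne| + |tesVal A.dropLast - tesVal B.dropLast| := by
          have : (A.getLast hAne - tesVal A.dropLast) - (B.getLast hBne - tesVal B.dropLast)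
              = (A.getLast hAne - B.getLast hBne)
                - (tesVal A.dropLast - tesVal B.dropLast) := by ring
          rw [this]; exact abs_sub _ _
        refine h1.trans ?_
        have h2 := ih n (Nat.lt_succ_self n) A.dropLast B.dropLast hAlen hBlen
        have key : (List.zipWith (fun x y => |x - y|) A B).sum
            = (List.zipWith (fun x y => |x - y|) A.dropLast B.dropLast).sum
              + |A.getLast hAne - B.getLast hBne| := by
          conv_lhs => rw [← List.dropLast_append_getLast hAne, ← List.dropLast_append_getLast hBne]
          exact tes_zip_concat _ _ _ _ (by rw [hAlen, hBlen])
        rw [key]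
        linarith

/-- Lipschitz property of the two-ended stack value in the ℓ¹-norm of the weights. -/
theorem tesVal_lipschitz (a b : List ℝ) (h : a.length = b.length) :
    |tesVal a - tesVal b| ≤ (List.zipWith (fun x y => |x - y|) a b).sum :=
  tes_aux a.length a b rfl h.symm
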